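/- For any matrix Z ∈ ℝ^{m×n} with singular value decomposition Z = UΣVᵀ (singular values in non-increasing order), the truncated SVD U Σ_r Vᵀ — where Σ_r keeps only the r largest singular values and zeroes the rest — is a minimizer of ‖Z − Y‖_F² over all Y with rank(Y) ≤ r (Eckart–Young theorem in Frobenius norm). -/

import Mathlib

open scoped BigOperators

/-- Frobenius norm of a real matrix. -/
noncomputable def frobNorm {m n : ℕ} (A : Matrix (Fin m) (Fin n) ℝ) : ℝ :=
  Real.sqrt (∑ i, ∑ j, A i j ^ 2)

noncomputable def frobSq {m n : ℕ} (A : Matrix (Fin m) (Fin n) ℝ) : ℝ :=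
  ∑ i, ∑ j, A i j ^ 2

lemma frobSq_nonneg {m n : ℕ} (A : Matrix (Fin m) (Fin n) ℝ) : 0 ≤ frobSq A := by
  apply Finset.sum_nonneg; intro i _; apply Finset.sum_nonneg; intro j _; positivity

lemma frobSq_eq_trace {m n : ℕ} (A : Matrix (Fin m) (Fin n) ℝ) :
    frobSq A = (A.transpose * A).trace := by
  unfold frobSq
  rw [Matrix.trace, Finset.sum_comm]
  apply Finset.sum_congr rfl
  intro j _
  simp [Matrix.diag, Matrix.mul_apply, Matrix.transpose_apply, sq]

lemma frobSq_mul_le {m n k : ℕ} (A : Matrix (Fin m) (Fin n) ℝ)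
    (W : Matrix (Fin n) (Fin k) ℝ) (hW : W.transpose * W = 1) :
    frobSq (A * W) ≤ frobSq A := by
  have key : frobSq (A - A * (W * W.transpose)) = frobSq A - frobSq (A * W) := by
    rw [frobSq_eq_trace, frobSq_eq_trace, frobSq_eq_trace]
    have h1 : ((A * W).transpose * (A * W)).trace
        = ((A.transpose * A) * (W * W.transpose)).trace := by
      rw [Matrix.transpose_mul]
      rw [show W.transpose * A.transpose * (A * W) = W.transpose * (A.transpose * A * W) by
        simp [Matrix.mul_assoc]]
      rw [Matrix.trace_mul_comm, ← Matrix.mul_assoc]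
    have h2 : ((W * W.transpose) * (W * W.transpose) : Matrix (Fin n) (Fin n) ℝ)
        = W * W.transpose := by
      rw [show W * W.transpose * (W * W.transpose) = W * (W.transpose * W) * W.transpose by
        simp [Matrix.mul_assoc], hW, Matrix.mul_one]
    have h3 : (A - A * (W * W.transpose)).transpose * (A - A * (W * W.transpose))
        = A.transpose * A - A.transpose * A * (W * W.transpose)
          - (W * W.transpose) * (A.transpose * A)
          + (W * W.transpose) * (A.transpose * A) * (W * W.transpose) := by
      rw [Matrix.transpose_sub, Matrix.transpose_mul, Matrix.transpose_mul,
        Matrix.transpose_transpose, Matrix.sub_mul, Matrix.mul_sub, Matrix.mul_sub]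
      simp only [Matrix.mul_assoc]
      abel
    rw [h3, Matrix.trace_add, Matrix.trace_sub, Matrix.trace_sub]
    have h4 : ((W * W.transpose) * (A.transpose * A)).trace
        = ((A.transpose * A) * (W * W.transpose)).trace := by
      rw [Matrix.trace_mul_comm]
    have h5 : ((W * W.transpose) * (A.transpose * A) * (W * W.transpose)).trace
        = ((A.transpose * A) * (W * W.transpose)).trace := by
      rw [Matrix.trace_mul_comm, ← Matrix.mul_assoc, h2]; exact h4
    rw [h4, h5, h1]; ring
  have h := frobSq_nonneg (A - A * (W * W.transpose))
  rw [key] at h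
  linarith

lemma frobSq_unitary_left {m n : ℕ} (U : Matrix (Fin m) (Fin m) ℝ)
    (hU : U.transpose * U = 1) (A : Matrix (Fin m) (Fin n) ℝ) :
    frobSq (U * A) = frobSq A := by
  rw [frobSq_eq_trace, frobSq_eq_trace, Matrix.transpose_mul,
    show A.transpose * U.transpose * (U * A) = A.transpose * (U.transpose * U) * A by
      simp [Matrix.mul_assoc], hU, Matrix.mul_one]

lemma frobSq_unitary_right {m n : ℕ} (Q : Matrix (Fin n) (Fin n) ℝ)
    (hQ : Q * Q.transpose = 1) (A : Matrix (Fin m) (Fin n) ℝ) :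
    frobSq (A * Q) = frobSq A := by
  rw [frobSq_eq_trace, frobSq_eq_trace, Matrix.transpose_mul,
    show Q.transpose * A.transpose * (A * Q) = Q.transpose * (A.transpose * A * Q) by
      simp [Matrix.mul_assoc],
    Matrix.trace_mul_comm,
    show A.transpose * A * Q * Q.transpose = A.transpose * A * (Q * Q.transpose) by
      simp [Matrix.mul_assoc], hQ, Matrix.mul_one]

lemma exists_kernel_W {m n r : ℕ} (Y : Matrix (Fin m) (Fin n) ℝ) (hY : Y.rank ≤ r)
    (hrn : r ≤ n) :
    ∃ W : Matrix (Fin n) (Fin (n - r)) ℝ, W.transpose * W = 1 ∧ Y * W = 0 := by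
  classical
  set g : EuclideanSpace ℝ (Fin n) →ₗ[ℝ] (Fin m → ℝ) :=
    Y.mulVecLin ∘ₗ (WithLp.linearEquiv 2 ℝ (Fin n → ℝ)).toLinearMap with hg
  have hrange : LinearMap.range g = LinearMap.range Y.mulVecLin := by
    rw [hg, LinearMap.range_comp_of_range_eq_top]
    exact LinearMap.range_eq_top.mpr (WithLp.linearEquiv 2 ℝ (Fin n → ℝ)).surjective
  have hrk : Module.finrank ℝ (LinearMap.range g) = Y.rank := by
    rw [hrange]; rfl
  have hsum := LinearMap.finrank_range_add_finrank_ker g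
  have hEdim : Module.finrank ℝ (EuclideanSpace ℝ (Fin n)) = n := by
    simp [finrank_euclideanSpace]
  rw [hEdim, hrk] at hsum
  have hle : n - r ≤ Module.finrank ℝ (LinearMap.ker g) := by omega
  set K := LinearMap.ker g
  let b := stdOrthonormalBasis ℝ K
  set w : Fin (n - r) → EuclideanSpace ℝ (Fin n) := fun k => (b (Fin.castLE hle k) : _)
  have hw_orth : ∀ k l, (inner ℝ (w k) (w l) : ℝ) = if k = l then 1 else 0 := by
    intro k l
    have := (orthonormal_iff_ite.mp b.orthonormal) (Fin.castLE hle k) (Fin.castLE hle l)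
    rw [Submodule.coe_inner] at this
    rw [show w k = (b (Fin.castLE hle k) : EuclideanSpace ℝ (Fin n)) from rfl,
      show w l = (b (Fin.castLE hle l) : EuclideanSpace ℝ (Fin n)) from rfl, this]
    congr 1
    simp [Fin.castLE_inj]
  have hker : ∀ k, Y.mulVec (w k) = 0 := by
    intro k
    have hm : w k ∈ K := (b (Fin.castLE hle k)).2
    exact hm
  refine ⟨Matrix.of (fun j k => w k j), ?_, ?_⟩
  · ext k l
    have := hw_orth k l
    rw [PiLp.inner_apply] at this
    simp only [RCLike.inner_apply, conj_trivial] at this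
    simp only [Matrix.mul_apply, Matrix.transpose_apply, Matrix.of_apply, Matrix.one_apply]
    rw [← this]
    exact Finset.sum_congr rfl (fun x _ => mul_comm _ _)
  · ext i k
    have := congrFun (hker k) i
    simp only [Matrix.mulVec, dotProduct] at this
    simp only [Matrix.mul_apply, Matrix.of_apply, Matrix.zero_apply]
    exact this

lemma count_ge (r : ℕ) : ∀ N, ∑ t ∈ Finset.range N, (if r ≤ t then (1:ℕ) else 0) = N - r := by
  intro N
  induction N with
  | zero => simp
  | succ N ih =>
    rw [Finset.sum_range_succ, ih]
    split_ifs with h <;> omega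

lemma scalar_key (n r : ℕ) (lam c : Fin n → ℝ)
    (hlam0 : ∀ j, 0 ≤ lam j)
    (hmono : ∀ i j : Fin n, (i : ℕ) ≤ (j : ℕ) → lam j ≤ lam i)
    (hc0 : ∀ j, 0 ≤ c j) (hc1 : ∀ j, c j ≤ 1)
    (hsum : ∑ j, c j = ((n - r : ℕ) : ℝ)) :
    ∑ j : Fin n, (if r ≤ (j : ℕ) then lam j else 0) ≤ ∑ j : Fin n, lam j * c j := by
  classical
  by_cases hr : r < n
  · set p : Fin n → Prop := fun j => r ≤ (j : ℕ) with hp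
    set t := lam ⟨r, hr⟩ with ht
    have hcard : (Finset.univ.filter p).card = n - r := by
      rw [Finset.card_filter]
      rw [Fin.sum_univ_eq_sum_range (fun k => if r ≤ k then (1:ℕ) else 0) n]
      exact count_ge r n
    have e2 : ∑ _j ∈ Finset.univ.filter p, (1:ℝ) = ((n - r : ℕ) : ℝ) := by
      rw [Finset.sum_const, hcard, nsmul_eq_mul, mul_one]
    have e1 : ∑ j ∈ Finset.univ.filter p, c j + ∑ j ∈ Finset.univ.filter (fun j => ¬ p j), c j
        = ((n - r : ℕ) : ℝ) := by
      rw [Finset.sum_filter_add_sum_filter_not, hsum]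
    have b1 : ∑ j ∈ Finset.univ.filter (fun j => ¬ p j), t * c j
        ≤ ∑ j ∈ Finset.univ.filter (fun j => ¬ p j), lam j * c j := by
      apply Finset.sum_le_sum
      intro j hj
      rw [Finset.mem_filter] at hj
      refine mul_le_mul_of_nonneg_right (hmono j ⟨r, hr⟩ ?_) (hc0 j)
      have := hj.2
      simp only [hp] at this
      simp only [Fin.val_mk]
      omega
    have b2 : ∑ j ∈ Finset.univ.filter p, (lam j - lam j * c j)
        ≤ ∑ j ∈ Finset.univ.filter p, (t - t * c j) := by
      apply Finset.sum_le_sum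
      intro j hj
      rw [Finset.mem_filter] at hj
      have h1 : lam j ≤ t := hmono ⟨r, hr⟩ j hj.2
      nlinarith [hc1 j, hc0 j]
    have split1 : ∑ j : Fin n, lam j * c j = ∑ j ∈ Finset.univ.filter p, lam j * c j
        + ∑ j ∈ Finset.univ.filter (fun j => ¬ p j), lam j * c j :=
      (Finset.sum_filter_add_sum_filter_not _ _ _).symm
    have split2 : ∑ j : Fin n, (if r ≤ (j : ℕ) then lam j else 0)
        = ∑ j ∈ Finset.univ.filter p, lam j := by
      rw [Finset.sum_filter]
    rw [split1, split2]
    rw [Finset.sum_sub_distrib, Finset.sum_sub_distrib, ← Finset.mul_sum] at b2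
    rw [← Finset.mul_sum] at b1
    have e3 : ∑ _x ∈ Finset.univ.filter p, t = t * ((n - r : ℕ) : ℝ) := by
      rw [Finset.sum_const, hcard, nsmul_eq_mul]; ring
    have e4 : t * (∑ j ∈ Finset.univ.filter p, c j)
        + t * (∑ j ∈ Finset.univ.filter (fun j => ¬ p j), c j) = t * ((n - r : ℕ) : ℝ) := by
      rw [← mul_add, e1]
    rw [e3] at b2
    linarith
  · have hLHS : ∑ j : Fin n, (if r ≤ (j : ℕ) then lam j else 0) = 0 := by
      apply Finset.sum_eq_zero
      intro j _
      rw [if_neg]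
      have := j.2
      omega
    rw [hLHS]
    apply Finset.sum_nonneg
    intro j _
    exact mul_nonneg (hlam0 j) (hc0 j)

lemma sum_range_min (a b : ℕ) (f : ℕ → ℝ) :
    (∑ t ∈ Finset.range a, if t < b then f t else 0) = ∑ t ∈ Finset.range (min a b), f t := by
  rw [← Finset.sum_filter]
  congr 1
  ext x
  simp only [Finset.mem_filter, Finset.mem_range]
  omega

lemma sum_fin_swap (m n : ℕ) (f : ℕ → ℝ) :
    (∑ i : Fin m, if (i : ℕ) < n then f i else 0)
      = ∑ j : Fin n, if (j : ℕ) < m then f j else 0 := by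
  rw [Fin.sum_univ_eq_sum_range (fun t => if t < n then f t else 0) m,
    Fin.sum_univ_eq_sum_range (fun t => if t < m then f t else 0) n,
    sum_range_min, sum_range_min, Nat.min_comm]

lemma sum_fin_diag {n : ℕ} (t : ℕ) (f : Fin n → ℝ) :
    (∑ j : Fin n, if t = (j : ℕ) then f j else 0) = if h : t < n then f ⟨t, h⟩ else 0 := by
  split_ifs with h
  · rw [Finset.sum_eq_single ⟨t, h⟩]
    · simp
    · intro j _ hj
      rw [if_neg]
      intro he
      exact hj (by ext; simp [← he])
    · intro hu; exact absurd (Finset.mem_univ _) hu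
  · apply Finset.sum_eq_zero
    intro j _
    rw [if_neg]
    intro he
    exact h (he ▸ j.2)

set_option maxHeartbeats 2000000 in
/-- Eckart–Young in Frobenius norm: if Z = UΣVᵀ is an SVD with
singular values σ in non-increasing order, then the truncated SVD UΣ_rVᵀ,
keeping only the r largest singular values, has rank ≤ r and minimizes
‖Z − Y‖_F over all Y with rank(Y) ≤ r. -/
theorem stmt5 (m n r : ℕ) (hr : r ≤ min m n)
    (U : Matrix (Fin m) (Fin m) ℝ) (V : Matrix (Fin n) (Fin n) ℝ)
    (hU : U * U.transpose = 1) (hU' : U.transpose * U = 1)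
    (hV : V * V.transpose = 1) (hV' : V.transpose * V = 1)
    (σ : ℕ → ℝ) (hσnonneg : ∀ i, 0 ≤ σ i)
    (hσmono : ∀ i j, i ≤ j → σ j ≤ σ i)
    (Smat Sr : Matrix (Fin m) (Fin n) ℝ)
    (hS : ∀ i j, Smat i j = if (i : ℕ) = (j : ℕ) then σ i else 0)
    (hSr : ∀ i j, Sr i j = if (i : ℕ) = (j : ℕ) ∧ (i : ℕ) < r then σ i else 0)
    (Z : Matrix (Fin m) (Fin n) ℝ) (hZ : Z = U * Smat * V.transpose) :
    (U * Sr * V.transpose).rank ≤ r ∧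
      ∀ Y : Matrix (Fin m) (Fin n) ℝ, Y.rank ≤ r →
        frobNorm (Z - U * Sr * V.transpose) ≤ frobNorm (Z - Y) := by
  have hrm : r ≤ m := le_trans hr (min_le_left _ _)
  have hrn : r ≤ n := le_trans hr (min_le_right _ _)
  constructor
  · -- rank part
    set A0 : Matrix (Fin m) (Fin r) ℝ :=
      Matrix.of (fun i k => if (i : ℕ) = (k : ℕ) then σ i else 0) with hA0
    set B0 : Matrix (Fin r) (Fin n) ℝ :=
      Matrix.of (fun k j => if (k : ℕ) = (j : ℕ) then (1 : ℝ) else 0) with hB0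
    have hfact : Sr = A0 * B0 := by
      ext i j
      rw [Matrix.mul_apply, hSr]
      have hterm : ∀ k : Fin r, A0 i k * B0 k j
          = if (i : ℕ) = (k : ℕ) then (if (i : ℕ) = (j : ℕ) then σ i else 0) else 0 := by
        intro k
        simp only [hA0, hB0, Matrix.of_apply]
        split_ifs <;> simp_all <;> omega
      rw [Finset.sum_congr rfl (fun k _ => hterm k),
        sum_fin_diag (i : ℕ) (fun _ => if (i : ℕ) = (j : ℕ) then σ i else 0)]
      by_cases h1 : (i : ℕ) < r
      · rw [dif_pos h1]
        by_cases h2 : (i : ℕ) = (j : ℕ)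
        · rw [if_pos h2, if_pos ⟨h2, h1⟩]
        · rw [if_neg h2, if_neg (by tauto)]
      · rw [dif_neg h1, if_neg (by tauto)]
    have heq : U * Sr * V.transpose = (U * A0) * (B0 * V.transpose) := by
      rw [hfact]; simp [Matrix.mul_assoc]
    rw [heq]
    refine le_trans (Matrix.rank_mul_le_right _ _) (le_trans (Matrix.rank_le_card_height _) ?_)
    simp
  · intro Y hY
    set lam : Fin n → ℝ := fun j => if (j : ℕ) < m then σ j ^ 2 else 0 with hlam
    -- step 1 & 2 : compute frobSq of truncation error
    have step1 : frobSq (Z - U * Sr * V.transpose) = frobSq (Smat - Sr) := by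
      have h : Z - U * Sr * V.transpose = U * (Smat - Sr) * V.transpose := by
        rw [hZ, Matrix.mul_sub, Matrix.sub_mul]
      have hQ : V.transpose * V.transpose.transpose = 1 := by
        rw [Matrix.transpose_transpose]; exact hV'
      rw [h, frobSq_unitary_right V.transpose hQ, frobSq_unitary_left U hU']
    have step2 : frobSq (Smat - Sr) = ∑ j : Fin n, (if r ≤ (j : ℕ) then lam j else 0) := by
      unfold frobSq
      have hinner : ∀ i : Fin m, (∑ j : Fin n, ((Smat - Sr) i j) ^ 2)
          = if (i : ℕ) < n then (if r ≤ (i : ℕ) then σ i ^ 2 else 0) else 0 := by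
        intro i
        have hentry : ∀ j : Fin n, ((Smat - Sr) i j) ^ 2
            = if (i : ℕ) = (j : ℕ) then (if r ≤ (i : ℕ) then σ i ^ 2 else 0) else 0 := by
          intro j
          rw [Matrix.sub_apply, hS, hSr]
          split_ifs <;> simp_all <;> omega
        rw [Finset.sum_congr rfl (fun j _ => hentry j),
          sum_fin_diag (i : ℕ) (fun _ => if r ≤ (i : ℕ) then σ i ^ 2 else 0)]
        split_ifs <;> rfl
      rw [Finset.sum_congr rfl (fun i _ => hinner i),
        sum_fin_swap m n (fun t => if r ≤ t then σ t ^ 2 else 0)]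
      apply Finset.sum_congr rfl
      intro j _
      simp only [hlam]
      split_ifs <;> rfl
    -- Y side
    obtain ⟨W, hWo, hYW⟩ := exists_kernel_W Y hY hrn
    set W' : Matrix (Fin n) (Fin (n - r)) ℝ := V.transpose * W with hW'def
    have hW'o : W'.transpose * W' = 1 := by
      rw [hW'def, Matrix.transpose_mul, Matrix.transpose_transpose,
        show W.transpose * V * (V.transpose * W)
          = W.transpose * (V * V.transpose) * W by simp [Matrix.mul_assoc],
        hV, Matrix.mul_one, hWo]
    set c : Fin n → ℝ := fun j => ∑ k, (W' j k) ^ 2 with hc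
    have hc0 : ∀ j, 0 ≤ c j := by
      intro j; apply Finset.sum_nonneg; intro k _; positivity
    have hcsum : ∑ j, c j = ((n - r : ℕ) : ℝ) := by
      have h1 : ∑ j, c j = frobSq W' := rfl
      rw [h1, frobSq_eq_trace, hW'o, Matrix.trace_one]
      simp
    have hc1 : ∀ j, c j ≤ 1 := by
      intro j
      set P : Matrix (Fin n) (Fin n) ℝ := W' * W'.transpose with hP
      have hPP : P * P = P := by
        rw [hP, show W' * W'.transpose * (W' * W'.transpose)
          = W' * (W'.transpose * W') * W'.transpose by simp [Matrix.mul_assoc],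
          hW'o, Matrix.mul_one]
      have hPsym : ∀ a b, P a b = P b a := by
        intro a b
        simp only [hP, Matrix.mul_apply, Matrix.transpose_apply]
        exact Finset.sum_congr rfl (fun k _ => mul_comm _ _)
      have hcP : c j = P j j := by
        simp only [hc, hP, Matrix.mul_apply, Matrix.transpose_apply, sq]
      have hb : (P j j) ^ 2 ≤ ∑ t, (P j t) ^ 2 :=
        Finset.single_le_sum (f := fun t => (P j t) ^ 2)
          (fun t _ => sq_nonneg _) (Finset.mem_univ j)
      have hdiag : P j j = ∑ t, (P j t) ^ 2 := by
        conv_lhs => rw [← hPP]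
        rw [Matrix.mul_apply]
        exact Finset.sum_congr rfl (fun t _ => by rw [sq, hPsym t j])
      nlinarith [hc0 j, hcP, hb, hdiag]
    -- step 3 : frobSq (Smat * W') = ∑ lam * c
    have step3 : frobSq (Smat * W') = ∑ j : Fin n, lam j * c j := by
      classical
      set cnat : ℕ → ℝ := fun t => if h : t < n then c ⟨t, h⟩ else 0 with hcnat
      unfold frobSq
      have hinner : ∀ i : Fin m, (∑ k, ((Smat * W') i k) ^ 2)
          = if (i : ℕ) < n then σ i ^ 2 * cnat i else 0 := by
        intro i
        have hentry : ∀ k, (Smat * W') i k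
            = if h : (i : ℕ) < n then σ i * W' ⟨i, h⟩ k else 0 := by
          intro k
          rw [Matrix.mul_apply]
          have : ∀ j : Fin n, Smat i j * W' j k
              = if (i : ℕ) = (j : ℕ) then σ i * W' j k else 0 := by
            intro j; rw [hS]; split_ifs <;> ring
          rw [Finset.sum_congr rfl (fun j _ => this j),
            sum_fin_diag (i : ℕ) (fun j => σ i * W' j k)]
        by_cases h : (i : ℕ) < n
        · rw [if_pos h]
          have : ∀ k, ((Smat * W') i k) ^ 2 = σ i ^ 2 * (W' ⟨i, h⟩ k) ^ 2 := by
            intro k; rw [hentry k, dif_pos h]; ring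
          rw [Finset.sum_congr rfl (fun k _ => this k), ← Finset.mul_sum]
          congr 1
          simp only [hcnat, hc]
          rw [dif_pos h]
        · rw [if_neg h]
          apply Finset.sum_eq_zero
          intro k _
          rw [hentry k, dif_neg h]
          ring
      rw [Finset.sum_congr rfl (fun i _ => hinner i),
        sum_fin_swap m n (fun t => σ t ^ 2 * cnat t)]
      apply Finset.sum_congr rfl
      intro j _
      simp only [hlam, hcnat]
      by_cases h : (j : ℕ) < m
      · rw [if_pos h, if_pos h, dif_pos j.2]
      · rw [if_neg h, if_neg h, zero_mul]
    -- step 4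
    have step4 : frobSq (Smat * W') ≤ frobSq (Z - Y) := by
      have h1 : (Z - Y) * W = U * (Smat * W') := by
        rw [Matrix.sub_mul, hYW, sub_zero, hZ, hW'def]
        simp [Matrix.mul_assoc]
      calc frobSq (Smat * W') = frobSq ((Z - Y) * W) := by
            rw [h1, frobSq_unitary_left U hU']
        _ ≤ frobSq (Z - Y) := frobSq_mul_le _ W hWo
    -- scalar inequality
    have hkey : ∑ j : Fin n, (if r ≤ (j : ℕ) then lam j else 0) ≤ ∑ j : Fin n, lam j * c j := by
      apply scalar_key n r lam c
      · intro j; simp only [hlam]; split_ifs <;> positivity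
      · intro i j hij
        simp only [hlam]
        split_ifs with h1 h2 h3
        · nlinarith [hσmono (i : ℕ) (j : ℕ) hij, hσnonneg (j : ℕ), hσnonneg (i : ℕ)]
        · omega
        · positivity
        · exact le_rfl
      · exact hc0
      · exact hc1
      · exact hcsum
    -- conclude
    have hfinal : frobSq (Z - U * Sr * V.transpose) ≤ frobSq (Z - Y) := by
      rw [step1, step2]
      calc ∑ j : Fin n, (if r ≤ (j : ℕ) then lam j else 0)
          ≤ ∑ j : Fin n, lam j * c j := hkey
        _ = frobSq (Smat * W') := step3.symm
        _ ≤ frobSq (Z - Y) := step4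
    unfold frobNorm
    exact Real.sqrt_le_sqrt hfinal
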